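/- Assume (H1), fix γ₁ > 0 and γ₂ < 0, and let u, v : ℝ → ℝ be differentiable functions with u(φ) > 0, v(φ) > 0 and (u(φ), v(φ), φ) satisfying the system (AE) for every φ ∈ ℝ. Then there exist constants M > 0 and k > 0 such that for every φ ∈ ℝ: |u'(φ)| ≤ M, |v'(φ)| ≤ M, and γ₁·u'(φ) + γ₂·v'(φ) ≤ −k. (Proposition 2.5(ii): uniform boundedness of the derivatives and the uniform negative bound on γ₁·u' + γ₂·v'.) -/
import Mathlib

set_option maxHeartbeats 1000000 in
/-- Proposition 2.5(ii): uniform boundedness of `u'`, `v'` and the uniform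
negative upper bound on `γ₁·u' + γ₂·v'` along the solution branch of (AE)
under (H1). -/
theorem stmt_6 (d₁ d₂ θ₁ θ₂ g₁₁ g₁₂ g₂₁ g₂₂ c₁ c₂ γ₁ γ₂ : ℝ)
    (hd₁ : 0 < d₁) (hd₂ : 0 < d₂) (hθ₁ : 0 < θ₁) (hθ₂ : θ₂ < 0)
    (hg₁₁ : 0 < g₁₁) (hg₁₂ : 0 < g₁₂) (hg₂₁ : 0 < g₂₁) (hg₂₂ : 0 < g₂₂)
    (hH1 : 0 ≤ g₁₁ * g₂₂ - g₁₂ * g₂₁)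
    (hγ₁ : 0 < γ₁) (hγ₂ : γ₂ < 0)
    (u v : ℝ → ℝ) (hu : Differentiable ℝ u) (hv : Differentiable ℝ v)
    (hupos : ∀ φ : ℝ, 0 < u φ) (hvpos : ∀ φ : ℝ, 0 < v φ)
    (hAE1 : ∀ φ : ℝ, d₁ * Real.log (u φ) + θ₁ * φ + g₁₁ * u φ + g₁₂ * v φ = c₁)
    (hAE2 : ∀ φ : ℝ, d₂ * Real.log (v φ) + θ₂ * φ + g₂₁ * u φ + g₂₂ * v φ = c₂) :
    ∃ M k : ℝ, 0 < M ∧ 0 < k ∧ ∀ φ : ℝ,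
      |deriv u φ| ≤ M ∧ |deriv v φ| ≤ M ∧
      γ₁ * deriv u φ + γ₂ * deriv v φ ≤ -k := by
  have hθ₂' : 0 < -θ₂ := by linarith
  have hγ₂' : 0 < -γ₂ := by linarith
  -- differentiate the two algebraic equations
  have key : ∀ φ : ℝ,
      (d₁ / u φ + g₁₁) * deriv u φ + g₁₂ * deriv v φ = -θ₁ ∧
      g₂₁ * deriv u φ + (d₂ / v φ + g₂₂) * deriv v φ = -θ₂ := by
    intro φ
    have hu' : HasDerivAt u (deriv u φ) φ := (hu φ).hasDerivAt
    have hv' : HasDerivAt v (deriv v φ) φ := (hv φ).hasDerivAt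
    have hune : u φ ≠ 0 := (hupos φ).ne'
    have hvne : v φ ≠ 0 := (hvpos φ).ne'
    have HU : HasDerivAt (fun x => d₁ * Real.log (u x) + θ₁ * x + g₁₁ * u x + g₁₂ * v x)
        (d₁ * (deriv u φ / u φ) + θ₁ * 1 + g₁₁ * deriv u φ + g₁₂ * deriv v φ) φ :=
      ((((hu'.log hune).const_mul d₁).add ((hasDerivAt_id φ).const_mul θ₁)).add
        (hu'.const_mul g₁₁)).add (hv'.const_mul g₁₂)
    have HV : HasDerivAt (fun x => d₂ * Real.log (v x) + θ₂ * x + g₂₁ * u x + g₂₂ * v x)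
        (d₂ * (deriv v φ / v φ) + θ₂ * 1 + g₂₁ * deriv u φ + g₂₂ * deriv v φ) φ :=
      ((((hv'.log hvne).const_mul d₂).add ((hasDerivAt_id φ).const_mul θ₂)).add
        (hu'.const_mul g₂₁)).add (hv'.const_mul g₂₂)
    have HUc : (fun x => d₁ * Real.log (u x) + θ₁ * x + g₁₁ * u x + g₁₂ * v x)
        = fun _ => c₁ := funext hAE1
    have HVc : (fun x => d₂ * Real.log (v x) + θ₂ * x + g₂₁ * u x + g₂₂ * v x)
        = fun _ => c₂ := funext hAE2
    rw [HUc] at HU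
    rw [HVc] at HV
    have e1 := HU.unique (hasDerivAt_const φ c₁)
    have e2 := HV.unique (hasDerivAt_const φ c₂)
    have hd1 : d₁ * (deriv u φ / u φ) = d₁ / u φ * deriv u φ := by
      field_simp
    have hd2 : d₂ * (deriv v φ / v φ) = d₂ / v φ * deriv v φ := by
      field_simp
    constructor
    · linear_combination e1 - hd1
    · linear_combination e2 - hd2
  -- conserved quantity (eliminating φ)
  have hcons : ∀ φ : ℝ, (-θ₂) * (d₁ * Real.log (u φ)) + θ₁ * (d₂ * Real.log (v φ))
      + ((-θ₂) * g₁₁ + θ₁ * g₂₁) * u φ + ((-θ₂) * g₁₂ + θ₁ * g₂₂) * v φ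
      = (-θ₂) * c₁ + θ₁ * c₂ := by
    intro φ
    linear_combination (-θ₂) * hAE1 φ + θ₁ * hAE2 φ
  have hPpos : 0 < (-θ₂) * g₁₁ + θ₁ * g₂₁ := by positivity
  -- Lemma A: u is bounded above unless v ≤ 1
  have lemA : ∃ U₀ : ℝ, 1 ≤ U₀ ∧ ∀ φ : ℝ, u φ ≤ U₀ ∨ v φ ≤ 1 := by
    refine ⟨max 1 (((-θ₂) * c₁ + θ₁ * c₂) / ((-θ₂) * g₁₁ + θ₁ * g₂₁)), le_max_left _ _, ?_⟩
    intro φ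
    by_cases hv1 : v φ ≤ 1
    · exact Or.inr hv1
    push_neg at hv1
    left
    by_cases hu1 : u φ ≤ 1
    · exact le_trans hu1 (le_max_left _ _)
    push_neg at hu1
    have hlu : 0 < Real.log (u φ) := Real.log_pos hu1
    have hlv : 0 < Real.log (v φ) := Real.log_pos hv1
    have h := hcons φ
    have t1 : 0 < (-θ₂) * (d₁ * Real.log (u φ)) := mul_pos hθ₂' (mul_pos hd₁ hlu)
    have t2 : 0 < θ₁ * (d₂ * Real.log (v φ)) := mul_pos hθ₁ (mul_pos hd₂ hlv)
    have t3 : 0 < ((-θ₂) * g₁₂ + θ₁ * g₂₂) * v φ := mul_pos (by positivity) (hvpos φ)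
    have hPu : ((-θ₂) * g₁₁ + θ₁ * g₂₁) * u φ ≤ (-θ₂) * c₁ + θ₁ * c₂ := by linarith
    have : u φ ≤ ((-θ₂) * c₁ + θ₁ * c₂) / ((-θ₂) * g₁₁ + θ₁ * g₂₁) := by
      rw [le_div_iff₀ hPpos]; linarith
    exact le_trans this (le_max_right _ _)
  -- Lemma B: u is bounded below unless v ≥ 1
  have lemB : ∃ u₀ : ℝ, 0 < u₀ ∧ ∀ φ : ℝ, u₀ ≤ u φ ∨ 1 ≤ v φ := by
    refine ⟨min 1 (Real.exp (((-θ₂) * (c₁ - g₁₁ - g₁₂) + θ₁ * (c₂ - g₂₁ - g₂₂)) /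
      ((-θ₂) * d₁))), ?_, ?_⟩
    · positivity
    intro φ
    by_cases hv1 : 1 ≤ v φ
    · exact Or.inr hv1
    push_neg at hv1
    left
    by_cases hu1 : 1 ≤ u φ
    · exact le_trans (min_le_left _ _) hu1
    push_neg at hu1
    have hlv : Real.log (v φ) ≤ 0 := Real.log_nonpos (hvpos φ).le hv1.le
    have h1 : c₁ - θ₁ * φ - g₁₁ - g₁₂ ≤ d₁ * Real.log (u φ) := by
      have e := hAE1 φ
      have a1 : g₁₁ * u φ ≤ g₁₁ := by linarith [mul_le_mul_of_nonneg_left hu1.le hg₁₁.le]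
      have a2 : g₁₂ * v φ ≤ g₁₂ := by linarith [mul_le_mul_of_nonneg_left hv1.le hg₁₂.le]
      linarith
    have h2 : c₂ - θ₂ * φ - g₂₁ - g₂₂ ≤ d₂ * Real.log (v φ) := by
      have e := hAE2 φ
      have a1 : g₂₁ * u φ ≤ g₂₁ := by linarith [mul_le_mul_of_nonneg_left hu1.le hg₂₁.le]
      have a2 : g₂₂ * v φ ≤ g₂₂ := by linarith [mul_le_mul_of_nonneg_left hv1.le hg₂₂.le]
      linarith
    have t0 : θ₁ * (d₂ * Real.log (v φ)) ≤ 0 :=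
      mul_nonpos_of_nonneg_of_nonpos hθ₁.le (mul_nonpos_of_nonneg_of_nonpos hd₂.le hlv)
    have hcomb : (-θ₂) * (c₁ - g₁₁ - g₁₂) + θ₁ * (c₂ - g₂₁ - g₂₂)
        ≤ (-θ₂) * (d₁ * Real.log (u φ)) := by
      linarith [mul_le_mul_of_nonneg_left h1 hθ₂'.le, mul_le_mul_of_nonneg_left h2 hθ₁.le, t0]
    have hden : 0 < (-θ₂) * d₁ := by positivity
    have hl : ((-θ₂) * (c₁ - g₁₁ - g₁₂) + θ₁ * (c₂ - g₂₁ - g₂₂)) / ((-θ₂) * d₁)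
        ≤ Real.log (u φ) := by
      rw [div_le_iff₀ hden]; linarith [hcomb]
    refine le_trans (min_le_right _ _) ?_
    rw [← Real.exp_log (hupos φ)]
    exact Real.exp_le_exp.2 hl
  obtain ⟨U₀, hU₀1, hAcase⟩ := lemA
  obtain ⟨u₀, hu₀pos, hBcase⟩ := lemB
  have hU₀pos : 0 < U₀ := lt_of_lt_of_le one_pos hU₀1
  -- constants
  set m : ℝ := min (d₁ * g₂₂ / U₀) (d₂ * g₁₁) with hmdef
  have hmpos : 0 < m := lt_min (by positivity) (by positivity)
  have hnum1 : 0 < θ₁ * g₂₂ - θ₂ * g₁₂ := by linarith [mul_pos hθ₁ hg₂₂, mul_pos hθ₂' hg₁₂]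
  have hnum2 : 0 < (-θ₂) * g₁₁ + θ₁ * g₂₁ := hPpos
  set Mu : ℝ := θ₁ / g₁₁ + (θ₁ * g₂₂ - θ₂ * g₁₂) / m with hMudef
  set Mv : ℝ := (-θ₂) / g₂₂ + ((-θ₂) * g₁₁ + θ₁ * g₂₁) / m with hMvdef
  have hMupos : 0 < Mu := add_pos (div_pos hθ₁ hg₁₁) (div_pos hnum1 hmpos)
  have hMvpos : 0 < Mv := add_pos (div_pos hθ₂' hg₂₂) (div_pos hnum2 hmpos)
  have hA₀pos : 0 < d₁ / u₀ + g₁₁ := by positivity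
  set k₁ : ℝ := γ₁ * θ₁ / (d₁ / u₀ + g₁₁) with hk₁def
  set k₂ : ℝ := γ₂ * θ₂ / (d₂ + g₂₂) with hk₂def
  have hk₁pos : 0 < k₁ := div_pos (mul_pos hγ₁ hθ₁) hA₀pos
  have hk₂pos : 0 < k₂ := div_pos (mul_pos_of_neg_of_neg hγ₂ hθ₂) (by positivity)
  refine ⟨max Mu Mv, min k₁ k₂, lt_max_of_lt_left hMupos, lt_min hk₁pos hk₂pos, ?_⟩
  intro φ
  obtain ⟨e1, e2⟩ := key φ
  set aa := d₁ / u φ with haa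
  set bb := d₂ / v φ with hbb
  have ha : 0 < aa := div_pos hd₁ (hupos φ)
  have hb : 0 < bb := div_pos hd₂ (hvpos φ)
  have hApos : 0 < aa + g₁₁ := by linarith
  have hBpos : 0 < bb + g₂₂ := by linarith
  set Δ : ℝ := (aa + g₁₁) * (bb + g₂₂) - g₁₂ * g₂₁ with hΔ
  have hΔge : aa * bb + aa * g₂₂ + bb * g₁₁ ≤ Δ := by rw [hΔ]; linarith [hH1]
  have hΔgeb : bb * g₁₁ ≤ Δ := by linarith [hΔge, mul_pos ha hb, mul_pos ha hg₂₂]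
  have hΔgea : aa * g₂₂ ≤ Δ := by linarith [hΔge, mul_pos ha hb, mul_pos hb hg₁₁]
  have hΔpos : 0 < Δ := by linarith [hΔge, mul_pos ha hb, mul_pos ha hg₂₂, mul_pos hb hg₁₁]
  have hΔleAB : Δ ≤ (aa + g₁₁) * (bb + g₂₂) := by
    rw [hΔ]; linarith [mul_pos hg₁₂ hg₂₁]
  -- m ≤ Δ
  have hΔm : m ≤ Δ := by
    rcases hAcase φ with h | h
    · have key2 : d₁ * g₂₂ / U₀ ≤ aa * g₂₂ := by
        rw [haa, div_mul_eq_mul_div, div_le_div_iff₀ hU₀pos (hupos φ)]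
        linarith [mul_le_mul_of_nonneg_left h (mul_pos hd₁ hg₂₂).le]
      calc m ≤ d₁ * g₂₂ / U₀ := min_le_left _ _
        _ ≤ aa * g₂₂ := key2
        _ ≤ Δ := hΔgea
    · have key2 : d₂ ≤ bb := by
        rw [hbb, le_div_iff₀ (hvpos φ)]
        linarith [mul_le_mul_of_nonneg_left h hd₂.le]
      calc m ≤ d₂ * g₁₁ := min_le_right _ _
        _ ≤ bb * g₁₁ := by
            have h2 : d₂ ≤ bb := key2
            linarith [mul_le_mul_of_nonneg_right h2 hg₁₁.le]
        _ ≤ Δ := hΔgeb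
  -- Cramer's rule
  have hw : Δ * deriv u φ = θ₂ * g₁₂ - θ₁ * (bb + g₂₂) := by
    rw [hΔ]; linear_combination (bb + g₂₂) * e1 - g₁₂ * e2
  have hz : Δ * deriv v φ = θ₁ * g₂₁ - θ₂ * (aa + g₁₁) := by
    rw [hΔ]; linear_combination (aa + g₁₁) * e2 - g₂₁ * e1
  have hwnumneg : θ₂ * g₁₂ - θ₁ * (bb + g₂₂) < 0 := by
    linarith [mul_pos hθ₁ hBpos, mul_pos hθ₂' hg₁₂]
  have hznumpos : 0 < θ₁ * g₂₁ - θ₂ * (aa + g₁₁) := by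
    linarith [mul_pos hθ₁ hg₂₁, mul_pos hθ₂' hApos]
  have hwneg : deriv u φ < 0 := by
    by_contra hcon
    push_neg at hcon
    linarith [mul_nonneg hΔpos.le hcon, hw]
  have hzpos : 0 < deriv v φ := by
    by_contra hcon
    push_neg at hcon
    nlinarith [mul_nonneg hΔpos.le (neg_nonneg.2 hcon), hz]
  refine ⟨?_, ?_, ?_⟩
  · -- |u'| ≤ M
    rw [abs_of_neg hwneg]
    have h1 : Δ * (-deriv u φ) = θ₁ * (bb + g₂₂) - θ₂ * g₁₂ := by linear_combination -hw
    have t1 : θ₁ * bb ≤ (θ₁ / g₁₁) * Δ := by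
      rw [div_mul_eq_mul_div, le_div_iff₀ hg₁₁]
      linarith [mul_le_mul_of_nonneg_left hΔgeb hθ₁.le]
    have t2 : θ₁ * g₂₂ - θ₂ * g₁₂ ≤ ((θ₁ * g₂₂ - θ₂ * g₁₂) / m) * Δ := by
      rw [div_mul_eq_mul_div, le_div_iff₀ hmpos]
      linarith [mul_le_mul_of_nonneg_left hΔm hnum1.le]
    have hnum : θ₁ * (bb + g₂₂) - θ₂ * g₁₂ ≤ Mu * Δ := by
      rw [hMudef]; linarith [t1, t2]
    have : -deriv u φ ≤ Mu := by
      refine le_of_mul_le_mul_left ?_ hΔpos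
      linarith [h1, hnum]
    exact le_trans this (le_max_left _ _)
  · -- |v'| ≤ M
    rw [abs_of_pos hzpos]
    have t1 : (-θ₂) * aa ≤ ((-θ₂) / g₂₂) * Δ := by
      rw [div_mul_eq_mul_div, le_div_iff₀ hg₂₂]
      linarith [mul_le_mul_of_nonneg_left hΔgea hθ₂'.le]
    have t2 : (-θ₂) * g₁₁ + θ₁ * g₂₁ ≤ (((-θ₂) * g₁₁ + θ₁ * g₂₁) / m) * Δ := by
      rw [div_mul_eq_mul_div, le_div_iff₀ hmpos]
      linarith [mul_le_mul_of_nonneg_left hΔm hnum2.le]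
    have hnum : θ₁ * g₂₁ - θ₂ * (aa + g₁₁) ≤ Mv * Δ := by
      rw [hMvdef]; linarith [t1, t2]
    have : deriv v φ ≤ Mv := by
      refine le_of_mul_le_mul_left ?_ hΔpos
      linarith [hz, hnum]
    exact le_trans this (le_max_right _ _)
  · -- γ₁ u' + γ₂ v' ≤ -k
    have hprod : Δ * (γ₁ * deriv u φ + γ₂ * deriv v φ)
        = γ₁ * (θ₂ * g₁₂ - θ₁ * (bb + g₂₂)) + γ₂ * (θ₁ * g₂₁ - θ₂ * (aa + g₁₁)) := by
      linear_combination γ₁ * hw + γ₂ * hz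
    rcases hBcase φ with h | h
    · -- u ≥ u₀, so aa ≤ d₁/u₀, use k₁
      have haaA : aa ≤ d₁ / u₀ := by
        rw [haa, div_le_div_iff₀ (hupos φ) hu₀pos]
        linarith [mul_le_mul_of_nonneg_left h hd₁.le]
      have hk₁A : k₁ * (d₁ / u₀ + g₁₁) = γ₁ * θ₁ := by
        rw [hk₁def]; field_simp
      have s1 : Δ * (γ₁ * deriv u φ + γ₂ * deriv v φ) ≤ -(γ₁ * θ₁ * (bb + g₂₂)) := by
        linarith [hprod, mul_pos (mul_pos hγ₁ hθ₂') hg₁₂, mul_pos (mul_pos hγ₂' hθ₁) hg₂₁,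
          mul_pos (mul_pos hγ₂' hθ₂') hApos]
      have s2a : k₁ * Δ ≤ k₁ * ((aa + g₁₁) * (bb + g₂₂)) :=
        mul_le_mul_of_nonneg_left hΔleAB hk₁pos.le
      have s2b : k₁ * ((aa + g₁₁) * (bb + g₂₂)) ≤ k₁ * ((d₁ / u₀ + g₁₁) * (bb + g₂₂)) := by
        apply mul_le_mul_of_nonneg_left _ hk₁pos.le
        apply mul_le_mul_of_nonneg_right (by linarith) hBpos.le
      have s2c : k₁ * ((d₁ / u₀ + g₁₁) * (bb + g₂₂)) = γ₁ * θ₁ * (bb + g₂₂) := by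
        linear_combination (bb + g₂₂) * hk₁A
      have s3 : Δ * (γ₁ * deriv u φ + γ₂ * deriv v φ) ≤ -(k₁ * Δ) := by linarith
      have s4 : γ₁ * deriv u φ + γ₂ * deriv v φ ≤ -k₁ := by
        refine le_of_mul_le_mul_left ?_ hΔpos
        linarith [s3]
      have : min k₁ k₂ ≤ k₁ := min_le_left _ _
      linarith
    · -- v ≥ 1, so bb ≤ d₂, use k₂
      have hbbB : bb ≤ d₂ := by
        rw [hbb, div_le_iff₀ (hvpos φ)]
        linarith [mul_le_mul_of_nonneg_left h hd₂.le]
      have hk₂A : k₂ * (d₂ + g₂₂) = γ₂ * θ₂ := by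
        rw [hk₂def]; field_simp
      have s1 : Δ * (γ₁ * deriv u φ + γ₂ * deriv v φ) ≤ -(γ₂ * θ₂ * (aa + g₁₁)) := by
        linarith [hprod, mul_pos (mul_pos hγ₁ hθ₂') hg₁₂, mul_pos (mul_pos hγ₂' hθ₁) hg₂₁,
          mul_pos (mul_pos hγ₁ hθ₁) hBpos]
      have s2a : k₂ * Δ ≤ k₂ * ((aa + g₁₁) * (bb + g₂₂)) :=
        mul_le_mul_of_nonneg_left hΔleAB hk₂pos.le
      have s2b : k₂ * ((aa + g₁₁) * (bb + g₂₂)) ≤ k₂ * ((aa + g₁₁) * (d₂ + g₂₂)) := by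
        apply mul_le_mul_of_nonneg_left _ hk₂pos.le
        apply mul_le_mul_of_nonneg_left (by linarith) hApos.le
      have s2c : k₂ * ((aa + g₁₁) * (d₂ + g₂₂)) = γ₂ * θ₂ * (aa + g₁₁) := by
        linear_combination (aa + g₁₁) * hk₂A
      have s3 : Δ * (γ₁ * deriv u φ + γ₂ * deriv v φ) ≤ -(k₂ * Δ) := by linarith
      have s4 : γ₁ * deriv u φ + γ₂ * deriv v φ ≤ -k₂ := by
        refine le_of_mul_le_mul_left ?_ hΔpos
        linarith [s3]
      have : min k₁ k₂ ≤ k₂ := min_le_right _ _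
      linarith
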